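/- arXiv:1804.05785 — 2 statements merged into one kernel-verified Lean document; each statement's English description precedes it below -/
import Mathlib

section
/- Assume parallel trends (PT), no anticipation (NA), and T ≥ 2. Define the static interaction-weighted estimator κ̂(n) := Σ_{e=1}^{T−1} (N_{{e}}(n) / Σ_{e'=1}^{T−1} N_{{e'}}(n)) · (1/(T−e)) · Σ_{l=0}^{T−1−e} δ̂^{0,{T}}_{e,l}(n). Then κ̂(n) converges almost surely, as n → ∞, to Σ_{e=1}^{T−1} P(E = e | E ≤ T−1) · (1/(T−e)) · Σ_{l=0}^{T−1−e} CATT(e,l), a convex weighted average of the cohort-specific average treatment effects on the treated. (Proposition 5: probability limit of the IW estimator for overall treatment effects.) -/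
open MeasureTheory Filter

noncomputable section

/-- Conditional expectation `E[Z | A] := E[Z·1_A] / P(A)` given an event `A`. -/
def cexp {Ω : Type*} [MeasurableSpace Ω] (μ : Measure Ω) (Z : Ω → ℝ) (A : Set Ω) : ℝ :=
  (∫ ω in A, Z ω ∂μ) / (μ A).toReal

/-- Observed outcome `Y_t := Y∞_t + Σ_{e=1}^{T} (Yᵉ_t − Y∞_t)·1{E = e}`. -/
def obsY {Ω : Type*} (T : ℕ) (E : Ω → ℕ) (Ye : ℕ → ℕ → Ω → ℝ) (Yinf : ℕ → Ω → ℝ)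
    (t : ℕ) (ω : Ω) : ℝ :=
  Yinf t ω + ∑ e ∈ Finset.Icc 1 T, (Ye e t ω - Yinf t ω) * (if E ω = e then 1 else 0)

/-- Cohort-specific average treatment effect on the treated,
`CATT(e,l) := E[Yᵉ_{e+l} − Y∞_{e+l} | E = e]`. -/
def CATT {Ω : Type*} [MeasurableSpace Ω] (μ : Measure Ω) (E : Ω → ℕ)
    (Ye : ℕ → ℕ → Ω → ℝ) (Yinf : ℕ → Ω → ℝ) (e : ℕ) (l : ℤ) : ℝ :=
  cexp μ (fun ω => Ye e ((e : ℤ) + l).toNat ω - Yinf ((e : ℤ) + l).toNat ω) {ω | E ω = e}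

/-- Parallel trends in baseline outcome. -/
def PT {Ω : Type*} [MeasurableSpace Ω] (μ : Measure Ω) (T : ℕ) (E : Ω → ℕ)
    (Yinf : ℕ → Ω → ℝ) : Prop :=
  ∀ e ∈ Finset.Icc 1 T, ∀ s ≤ T, ∀ t ≤ T,
    cexp μ (fun ω => Yinf t ω - Yinf s ω) {ω | E ω = e}
      = ∫ ω, (Yinf t ω - Yinf s ω) ∂μ

/-- No anticipatory behavior. -/
def NA {Ω : Type*} [MeasurableSpace Ω] (μ : Measure Ω) (T : ℕ)
    (Ye : ℕ → ℕ → Ω → ℝ) (Yinf : ℕ → Ω → ℝ) : Prop :=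
  ∀ e ∈ Finset.Icc 1 T, ∀ t < e, Ye e t =ᵐ[μ] Yinf t

/-- Number of indices `i < n` whose event time lies in `A`. -/
def sampleCount {Ω' : Type*} (Eseq : ℕ → Ω' → ℕ) (A : Finset ℕ) (n : ℕ) (ω' : Ω') : ℕ :=
  ((Finset.range n).filter (fun i => Eseq i ω' ∈ A)).card

/-- The sample difference-in-differences estimator `δ̂^{s,C}_{e,l}(n)`
(Lean's convention `x/0 = 0` handles vanishing denominators). -/
def sampleDID {Ω' : Type*} (Eseq : ℕ → Ω' → ℕ) (Yseq : ℕ → ℕ → Ω' → ℝ)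
    (e : ℕ) (l : ℤ) (s : ℕ) (C : Finset ℕ) (n : ℕ) (ω' : Ω') : ℝ :=
  (∑ i ∈ (Finset.range n).filter (fun i => Eseq i ω' = e),
      (Yseq i ((e : ℤ) + l).toNat ω' - Yseq i s ω'))
      / (sampleCount Eseq {e} n ω' : ℝ)
    - (∑ i ∈ (Finset.range n).filter (fun i => Eseq i ω' ∈ C),
        (Yseq i ((e : ℤ) + l).toNat ω' - Yseq i s ω'))
      / (sampleCount Eseq C n ω' : ℝ)

/-- The sequence `((E_i, (Y_{i,t})_t))_i` is i.i.d. with each term distributed as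
`(E, (Y_t)_t)`. -/
def IIDSample {Ω Ω' : Type*} [MeasurableSpace Ω] [MeasurableSpace Ω']
    (μ : Measure Ω) (μ' : Measure Ω') (T : ℕ) (E : Ω → ℕ)
    (Ye : ℕ → ℕ → Ω → ℝ) (Yinf : ℕ → Ω → ℝ)
    (Eseq : ℕ → Ω' → ℕ) (Yseq : ℕ → ℕ → Ω' → ℝ) : Prop :=
  ProbabilityTheory.iIndepFun
      (fun i ω' => ((Eseq i ω', fun t : Fin (T + 1) => Yseq i t ω') :
        ℕ × (Fin (T + 1) → ℝ))) μ'
    ∧ ∀ i : ℕ,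
        Measure.map (fun ω' => ((Eseq i ω', fun t : Fin (T + 1) => Yseq i t ω') :
          ℕ × (Fin (T + 1) → ℝ))) μ'
        = Measure.map (fun ω => ((E ω, fun t : Fin (T + 1) => obsY T E Ye Yinf t ω) :
          ℕ × (Fin (T + 1) → ℝ))) μ


open ProbabilityTheory Topology


lemma div_div_div_same {a b c : ℝ} (hc : c ≠ 0) : (a / c) / (b / c) = a / b := by
  rcases eq_or_ne b 0 with rfl | hb
  · simp
  · field_simp

lemma slln_comp {Ω Ω' β : Type*} [MeasurableSpace Ω] [MeasurableSpace Ω'] [MeasurableSpace β]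
    (μ : Measure Ω) [IsProbabilityMeasure μ] (μ' : Measure Ω') [IsProbabilityMeasure μ']
    (V : Ω → β) (hV : AEMeasurable V μ) (Vs : ℕ → Ω' → β)
    (hindep : iIndepFun Vs μ')
    (hlaw : ∀ i, μ'.map (Vs i) = μ.map V)
    (g : β → ℝ) (hg : Measurable g) (hint : Integrable (fun ω => g (V ω)) μ) :
    ∀ᵐ ω' ∂μ', Tendsto (fun n => (∑ i ∈ Finset.range n, g (Vs i ω')) / n) atTop
      (𝓝 (∫ ω, g (V ω) ∂μ)) := by
  have hprob : IsProbabilityMeasure (μ.map V) := Measure.isProbabilityMeasure_map hV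
  have hVs : ∀ i, AEMeasurable (Vs i) μ' := by
    intro i
    by_contra h
    have h0 : μ'.map (Vs i) = 0 := Measure.map_of_not_aemeasurable h
    rw [hlaw i] at h0
    have h1 : (μ.map V) Set.univ = 1 := measure_univ
    rw [h0] at h1
    simp at h1
  have hid : ∀ i, IdentDistrib (fun ω' => g (Vs i ω')) (fun ω => g (V ω)) μ' μ := by
    intro i
    refine ⟨hg.comp_aemeasurable (hVs i), hg.comp_aemeasurable hV, ?_⟩
    calc μ'.map (fun ω' => g (Vs i ω')) = (μ'.map (Vs i)).map g :=
          (AEMeasurable.map_map_of_aemeasurable hg.aemeasurable (hVs i)).symm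
    _ = (μ.map V).map g := by rw [hlaw i]
    _ = μ.map (fun ω => g (V ω)) :=
        AEMeasurable.map_map_of_aemeasurable hg.aemeasurable hV
  have hint' : Integrable (fun ω' => g (Vs 0 ω')) μ' := ((hid 0).integrable_iff).2 hint
  have hres := strong_law_ae_real (fun i ω' => g (Vs i ω')) hint'
    (fun i j hij => (hindep.indepFun hij).comp hg hg)
    (fun i => (hid i).trans (hid 0).symm)
  rw [(hid 0).integral_eq] at hres
  exact hres

lemma obsY_cohort {Ω : Type*} (T : ℕ) (E : Ω → ℕ) (Ye : ℕ → ℕ → Ω → ℝ) (Yinf : ℕ → Ω → ℝ)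
    {e : ℕ} (he : e ∈ Finset.Icc 1 T) (t : ℕ) (ω : Ω) (hω : E ω = e) :
    obsY T E Ye Yinf t ω = Ye e t ω := by
  unfold obsY
  rw [Finset.sum_eq_single e]
  · simp [hω]
  · intro b _ hbe
    simp [hω, hbe.symm]
  · exact fun h => absurd he h

lemma aemeasurable_pi' {ι : Type*} [Countable ι] {α : Type*} [MeasurableSpace α] {μ : Measure α}
    {f : α → ι → ℝ} (hf : ∀ i, AEMeasurable (fun a => f a i) μ) : AEMeasurable f μ := by
  refine ⟨fun a i => (hf i).mk _ a, measurable_pi_lambda _ fun i => (hf i).measurable_mk, ?_⟩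
  have h : ∀ᵐ a ∂μ, ∀ i, f a i = (hf i).mk _ a := ae_all_iff.2 fun i => (hf i).ae_eq_mk
  filter_upwards [h] with a ha
  funext i
  exact ha i

lemma obsY_indicator {Ω : Type*} (E : Ω → ℕ) (Ye : ℕ → ℕ → Ω → ℝ) (Yinf : ℕ → Ω → ℝ)
    (t : ℕ) (e : ℕ) :
    (fun ω => (Ye e t ω - Yinf t ω) * (if E ω = e then 1 else 0))
      = Set.indicator {ω | E ω = e} (fun ω => Ye e t ω - Yinf t ω) := by
  funext ω
  by_cases h : E ω = e <;> simp [Set.indicator_apply, h]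

/-- Proposition 5: the static interaction-weighted estimator `κ̂(n)` converges almost surely
to `Σ_{e=1}^{T−1} P(E = e | E ≤ T−1)·(1/(T−e))·Σ_{l=0}^{T−1−e} CATT(e,l)`. -/
theorem iw_static_estimator_consistent
    {Ω Ω' : Type*} [MeasurableSpace Ω] [MeasurableSpace Ω']
    (μ : Measure Ω) [IsProbabilityMeasure μ]
    (μ' : Measure Ω') [IsProbabilityMeasure μ']
    (T : ℕ) (hT : 2 ≤ T)
    (E : Ω → ℕ) (hE : Measurable E)
    (hsupp : μ {ω | 1 ≤ E ω ∧ E ω ≤ T} = 1)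
    (hpos : ∀ e ∈ Finset.Icc 1 T, 0 < μ {ω | E ω = e})
    (Ye : ℕ → ℕ → Ω → ℝ) (Yinf : ℕ → Ω → ℝ)
    (hL2e : ∀ e ∈ Finset.Icc 1 T, ∀ t ≤ T, MemLp (Ye e t) 2 μ)
    (hL2inf : ∀ t ≤ T, MemLp (Yinf t) 2 μ)
    (hPT : PT μ T E Yinf) (hNA : NA μ T Ye Yinf)
    (Eseq : ℕ → Ω' → ℕ) (Yseq : ℕ → ℕ → Ω' → ℝ)
    (hiid : IIDSample μ μ' T E Ye Yinf Eseq Yseq) :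
    ∀ᵐ ω' ∂μ', Tendsto
      (fun n => ∑ e ∈ Finset.Icc 1 (T - 1),
        ((sampleCount Eseq {e} n ω' : ℝ)
            / ∑ e' ∈ Finset.Icc 1 (T - 1), (sampleCount Eseq {e'} n ω' : ℝ))
          * ((1 / ((T : ℝ) - (e : ℝ)))
            * ∑ l ∈ Finset.range (T - e), sampleDID Eseq Yseq e (l : ℤ) 0 {T} n ω'))
      atTop
      (nhds (∑ e ∈ Finset.Icc 1 (T - 1),
        ((μ {ω | E ω = e ∧ E ω ≤ T - 1}).toReal / (μ {ω | E ω ≤ T - 1}).toReal)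
          * ((1 / ((T : ℝ) - (e : ℝ)))
            * ∑ l ∈ Finset.range (T - e), CATT μ E Ye Yinf e (l : ℤ)))) := by
  obtain ⟨hindep, hlaw⟩ := hiid
  have hT1 : 1 ≤ T := by omega
  have hAe : ∀ e : ℕ, MeasurableSet {ω | E ω = e} := fun e => hE (measurableSet_singleton e)
  have hP : ∀ e ∈ Finset.Icc 1 T, 0 < (μ {ω | E ω = e}).toReal := fun e he =>
    ENNReal.toReal_pos (hpos e he).ne' (measure_ne_top μ _)
  have hIntInf : ∀ t ≤ T, Integrable (Yinf t) μ := fun t ht => (hL2inf t ht).integrable one_le_two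
  have hIntYe : ∀ e ∈ Finset.Icc 1 T, ∀ t ≤ T, Integrable (Ye e t) μ := fun e he t ht =>
    (hL2e e he t ht).integrable one_le_two
  have hIntObs : ∀ t ≤ T, Integrable (obsY T E Ye Yinf t) μ := by
    intro t ht
    refine (hIntInf t ht).add (integrable_finset_sum _ fun e he => ?_)
    rw [obsY_indicator]
    exact ((hIntYe e he t ht).sub (hIntInf t ht)).indicator (hAe e)
  have hVmeas : AEMeasurable
      (fun ω => ((E ω, fun t : Fin (T + 1) => obsY T E Ye Yinf t ω) : ℕ × (Fin (T + 1) → ℝ))) μ := by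
    refine AEMeasurable.prodMk hE.aemeasurable (aemeasurable_pi' fun t => ?_)
    exact (hIntObs t (Nat.lt_succ_iff.mp t.isLt)).aestronglyMeasurable.aemeasurable
  have KEY : ∀ g : ℕ × (Fin (T + 1) → ℝ) → ℝ, Measurable g →
      Integrable (fun ω => g (E ω, fun t : Fin (T + 1) => obsY T E Ye Yinf t ω)) μ →
      ∀ᵐ ω' ∂μ', Tendsto
        (fun n => (∑ i ∈ Finset.range n, g (Eseq i ω', fun t : Fin (T + 1) => Yseq i t ω')) / n)
        atTop (𝓝 (∫ ω, g (E ω, fun t : Fin (T + 1) => obsY T E Ye Yinf t ω) ∂μ)) :=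
    fun g hg hint => slln_comp μ μ' _ hVmeas _ hindep hlaw g hg hint
  have hsetP : ∀ e : ℕ, MeasurableSet {p : ℕ × (Fin (T + 1) → ℝ) | p.1 = e} := fun e =>
    measurable_fst (measurableSet_singleton e)
  -- counts
  have H1 : ∀ᵐ ω' ∂μ', ∀ e, e ∈ Finset.Icc 1 T →
      Tendsto (fun n => (sampleCount Eseq {e} n ω' : ℝ) / n) atTop
        (𝓝 ((μ {ω | E ω = e}).toReal)) := by
    rw [ae_all_iff]
    intro e
    by_cases he : e ∈ Finset.Icc 1 T
    · have hcomp : (fun ω => if E ω = e then (1:ℝ) else 0)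
          = Set.indicator {ω | E ω = e} (fun _ => 1) := by
        funext ω; by_cases h : E ω = e <;> simp [Set.indicator_apply, h]
      have hint : Integrable
          (fun ω => if ((E ω, fun t : Fin (T + 1) => obsY T E Ye Yinf t ω) :
              ℕ × (Fin (T + 1) → ℝ)).1 = e then (1:ℝ) else 0) μ := by
        show Integrable (fun ω => if E ω = e then (1:ℝ) else 0) μ
        rw [hcomp]; exact (integrable_const 1).indicator (hAe e)
      have key := KEY (fun p => if p.1 = e then (1:ℝ) else 0)
        (Measurable.ite (hsetP e) measurable_const measurable_const) hint
      have hI : (∫ ω, (if ((E ω, fun t : Fin (T + 1) => obsY T E Ye Yinf t ω) :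
            ℕ × (Fin (T + 1) → ℝ)).1 = e then (1:ℝ) else 0) ∂μ) = (μ {ω | E ω = e}).toReal := by
        show (∫ ω, (if E ω = e then (1:ℝ) else 0) ∂μ) = _
        rw [hcomp, integral_indicator (hAe e), setIntegral_const]
        simp
        rfl
      rw [hI] at key
      filter_upwards [key] with ω' hω' _
      refine hω'.congr fun n => ?_
      congr 1
      show (∑ i ∈ Finset.range n, if Eseq i ω' = e then (1:ℝ) else 0) = _
      rw [Finset.sum_boole]
      unfold sampleCount
      norm_num [Finset.mem_singleton]
    · exact Eventually.of_forall fun ω' h => absurd h he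
  -- group sums
  have H2 : ∀ᵐ ω' ∂μ', ∀ e t, e ∈ Finset.Icc 1 T → t ≤ T →
      Tendsto (fun n => (∑ i ∈ (Finset.range n).filter (fun i => Eseq i ω' = e),
          (Yseq i t ω' - Yseq i 0 ω')) / n) atTop
        (𝓝 (∫ ω in {ω | E ω = e}, (obsY T E Ye Yinf t ω - obsY T E Ye Yinf 0 ω) ∂μ)) := by
    rw [ae_all_iff]
    intro e
    rw [ae_all_iff]
    intro t
    by_cases h : e ∈ Finset.Icc 1 T ∧ t ≤ T
    · obtain ⟨he, ht⟩ := h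
      have ht' : t < T + 1 := by omega
      have hcomp : (fun ω => if E ω = e then obsY T E Ye Yinf t ω - obsY T E Ye Yinf 0 ω else 0)
          = Set.indicator {ω | E ω = e}
            (fun ω => obsY T E Ye Yinf t ω - obsY T E Ye Yinf 0 ω) := by
        funext ω; by_cases h : E ω = e <;> simp [Set.indicator_apply, h]
      have hint : Integrable
          (fun ω => if ((E ω, fun t : Fin (T + 1) => obsY T E Ye Yinf t ω) :
              ℕ × (Fin (T + 1) → ℝ)).1 = e
            then ((E ω, fun t : Fin (T + 1) => obsY T E Ye Yinf t ω) :
              ℕ × (Fin (T + 1) → ℝ)).2 ⟨t, ht'⟩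
              - ((E ω, fun t : Fin (T + 1) => obsY T E Ye Yinf t ω) :
              ℕ × (Fin (T + 1) → ℝ)).2 ⟨0, by omega⟩ else 0) μ := by
        show Integrable
          (fun ω => if E ω = e then obsY T E Ye Yinf t ω - obsY T E Ye Yinf 0 ω else 0) μ
        rw [hcomp]
        exact ((hIntObs t ht).sub (hIntObs 0 (by omega))).indicator (hAe e)
      have key := KEY (fun p => if p.1 = e then p.2 ⟨t, ht'⟩ - p.2 ⟨0, by omega⟩ else 0)
        (Measurable.ite (hsetP e)
          (measurable_snd.eval.sub measurable_snd.eval) measurable_const) hint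
      have hI : (∫ ω, (if ((E ω, fun t : Fin (T + 1) => obsY T E Ye Yinf t ω) :
            ℕ × (Fin (T + 1) → ℝ)).1 = e
          then ((E ω, fun t : Fin (T + 1) => obsY T E Ye Yinf t ω) :
            ℕ × (Fin (T + 1) → ℝ)).2 ⟨t, ht'⟩
            - ((E ω, fun t : Fin (T + 1) => obsY T E Ye Yinf t ω) :
            ℕ × (Fin (T + 1) → ℝ)).2 ⟨0, by omega⟩ else 0) ∂μ)
          = ∫ ω in {ω | E ω = e}, (obsY T E Ye Yinf t ω - obsY T E Ye Yinf 0 ω) ∂μ := by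
        show (∫ ω, (if E ω = e then obsY T E Ye Yinf t ω - obsY T E Ye Yinf 0 ω else 0) ∂μ) = _
        rw [hcomp, integral_indicator (hAe e)]
      rw [hI] at key
      filter_upwards [key] with ω' hω' _ _
      refine hω'.congr fun n => ?_
      congr 1
      show (∑ i ∈ Finset.range n,
          if Eseq i ω' = e then Yseq i t ω' - Yseq i 0 ω' else 0) = _
      rw [← Finset.sum_filter]
    · exact Eventually.of_forall fun ω' he ht => absurd ⟨he, ht⟩ h
  -- population identification
  have hTT : T ∈ Finset.Icc 1 T := Finset.mem_Icc.mpr ⟨hT1, le_refl T⟩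
  have hident : ∀ e ∈ Finset.Icc 1 (T - 1), ∀ l : ℕ, l < T - e →
      (∫ ω in {ω | E ω = e}, (obsY T E Ye Yinf (e + l) ω - obsY T E Ye Yinf 0 ω) ∂μ)
          / (μ {ω | E ω = e}).toReal
        - (∫ ω in {ω | E ω = T}, (obsY T E Ye Yinf (e + l) ω - obsY T E Ye Yinf 0 ω) ∂μ)
          / (μ {ω | E ω = T}).toReal
        = CATT μ E Ye Yinf e (l : ℤ) := by
    intro e he l hl
    obtain ⟨he1, he2⟩ := Finset.mem_Icc.mp he
    have heT : e ∈ Finset.Icc 1 T := Finset.mem_Icc.mpr ⟨he1, by omega⟩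
    set t := e + l with htdef
    have ht : t ≤ T := by omega
    have htltT : t < T := by omega
    have A1 : (∫ ω in {ω | E ω = e}, (obsY T E Ye Yinf t ω - obsY T E Ye Yinf 0 ω) ∂μ)
        = ∫ ω in {ω | E ω = e}, (Ye e t ω - Ye e 0 ω) ∂μ :=
      setIntegral_congr_fun (hAe e) fun ω hω => by
        rw [obsY_cohort T E Ye Yinf heT t ω hω, obsY_cohort T E Ye Yinf heT 0 ω hω]
    have A2 : (∫ ω in {ω | E ω = e}, (Ye e t ω - Ye e 0 ω) ∂μ)
        = ∫ ω in {ω | E ω = e},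
            ((Ye e t ω - Yinf t ω) + (Yinf t ω - Yinf 0 ω)) ∂μ := by
      refine setIntegral_congr_ae (hAe e) ?_
      filter_upwards [hNA e heT 0 (by omega)] with ω hna _
      rw [hna]; ring
    have A3 : (∫ ω in {ω | E ω = e},
          ((Ye e t ω - Yinf t ω) + (Yinf t ω - Yinf 0 ω)) ∂μ)
        = (∫ ω in {ω | E ω = e}, (Ye e t ω - Yinf t ω) ∂μ)
          + ∫ ω in {ω | E ω = e}, (Yinf t ω - Yinf 0 ω) ∂μ :=
      integral_add ((hIntYe e heT t ht).sub (hIntInf t ht)).integrableOn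
        ((hIntInf t ht).sub (hIntInf 0 (by omega))).integrableOn
    have B1 : (∫ ω in {ω | E ω = T}, (obsY T E Ye Yinf t ω - obsY T E Ye Yinf 0 ω) ∂μ)
        = ∫ ω in {ω | E ω = T}, (Yinf t ω - Yinf 0 ω) ∂μ := by
      refine setIntegral_congr_ae (hAe T) ?_
      filter_upwards [hNA T hTT t htltT, hNA T hTT 0 (by omega)] with ω h1 h2 hmem
      rw [obsY_cohort T E Ye Yinf hTT t ω hmem, obsY_cohort T E Ye Yinf hTT 0 ω hmem, h1, h2]
    have hPTe := hPT e heT 0 (by omega) t ht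
    have hPTT := hPT T hTT 0 (by omega) t ht
    unfold cexp at hPTe hPTT
    have hCATT : CATT μ E Ye Yinf e (l : ℤ)
        = (∫ ω in {ω | E ω = e}, (Ye e t ω - Yinf t ω) ∂μ) / (μ {ω | E ω = e}).toReal := by
      unfold CATT cexp
      have hnat : ((e : ℤ) + (l : ℤ)).toNat = t := by omega
      rw [hnat]
    rw [A1, A2, A3, B1, add_div, hPTe, hPTT, ← hCATT]
    ring
  -- weights
  have hsub : ∀ e ∈ Finset.Icc 1 (T - 1), e ∈ Finset.Icc 1 T := by
    intro e he
    rw [Finset.mem_Icc] at *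
    omega
  have hQpos : 0 < ∑ e' ∈ Finset.Icc 1 (T - 1), (μ {ω | E ω = e'}).toReal :=
    Finset.sum_pos (fun i hi => hP i (hsub i hi)) ⟨1, Finset.mem_Icc.mpr ⟨le_refl 1, by omega⟩⟩
  have hWeq : ∀ e ∈ Finset.Icc 1 (T - 1),
      (μ {ω | E ω = e ∧ E ω ≤ T - 1}).toReal / (μ {ω | E ω ≤ T - 1}).toReal
        = (μ {ω | E ω = e}).toReal / ∑ e' ∈ Finset.Icc 1 (T - 1), (μ {ω | E ω = e'}).toReal := by
    intro e he
    obtain ⟨he1, he2⟩ := Finset.mem_Icc.mp he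
    have hs1 : {ω | E ω = e ∧ E ω ≤ T - 1} = {ω | E ω = e} := by
      ext ω
      simp only [Set.mem_setOf_eq]
      constructor
      · exact fun h => h.1
      · intro h
        exact ⟨h, by omega⟩
    have hcompl : μ {ω | 1 ≤ E ω ∧ E ω ≤ T}ᶜ = 0 := by
      have hm : MeasurableSet {ω | 1 ≤ E ω ∧ E ω ≤ T} := by
        have : {ω | 1 ≤ E ω ∧ E ω ≤ T} = E ⁻¹' (Set.Icc 1 T) := rfl
        rw [this]
        exact hE measurableSet_Icc
      rw [prob_compl_eq_zero_iff hm]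
      exact hsupp
    have hden : μ {ω | E ω ≤ T - 1} = ∑ e' ∈ Finset.Icc 1 (T - 1), μ {ω | E ω = e'} := by
      have h1 : μ {ω | E ω ≤ T - 1}
          = μ ({ω | E ω ≤ T - 1} ∩ {ω | 1 ≤ E ω ∧ E ω ≤ T}) :=
        (measure_inter_conull hcompl).symm
      have h2 : {ω | E ω ≤ T - 1} ∩ {ω | 1 ≤ E ω ∧ E ω ≤ T}
          = ⋃ e' ∈ Finset.Icc 1 (T - 1), {ω | E ω = e'} := by
        ext ω
        simp only [Set.mem_inter_iff, Set.mem_setOf_eq, Set.mem_iUnion, Finset.mem_Icc]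
        constructor
        · rintro ⟨ha, hb, hc⟩
          exact ⟨E ω, ⟨hb, ha⟩, rfl⟩
        · rintro ⟨e', ⟨ha, hb⟩, hc⟩
          omega
      rw [h1, h2, measure_biUnion_finset ?_ fun e' _ => hAe e']
      intro a _ b _ hab
      refine Set.disjoint_left.mpr fun ω h1 h2 => ?_
      simp only [Set.mem_setOf_eq] at h1 h2
      exact hab (h1.symm.trans h2)
    rw [hs1, hden, ENNReal.toReal_sum fun a _ => measure_ne_top μ _]
  -- final assembly
  have hterm : (∑ e ∈ Finset.Icc 1 (T - 1),
        ((μ {ω | E ω = e ∧ E ω ≤ T - 1}).toReal / (μ {ω | E ω ≤ T - 1}).toReal)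
          * ((1 / ((T : ℝ) - (e : ℝ)))
            * ∑ l ∈ Finset.range (T - e), CATT μ E Ye Yinf e (l : ℤ)))
      = ∑ e ∈ Finset.Icc 1 (T - 1),
        ((μ {ω | E ω = e}).toReal / ∑ e' ∈ Finset.Icc 1 (T - 1), (μ {ω | E ω = e'}).toReal)
          * ((1 / ((T : ℝ) - (e : ℝ)))
            * ∑ l ∈ Finset.range (T - e), CATT μ E Ye Yinf e (l : ℤ)) :=
    Finset.sum_congr rfl fun e he => by rw [hWeq e he]
  rw [hterm]
  filter_upwards [H1, H2] with ω' h1 h2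
  refine tendsto_finset_sum _ fun e he => ?_
  obtain ⟨he1, he2⟩ := Finset.mem_Icc.mp he
  have heT : e ∈ Finset.Icc 1 T := hsub e he
  have hNe := h1 e heT
  have hNT := h1 T hTT
  have hSum : Tendsto
      (fun n => (∑ e' ∈ Finset.Icc 1 (T - 1), (sampleCount Eseq {e'} n ω' : ℝ)) / n) atTop
      (𝓝 (∑ e' ∈ Finset.Icc 1 (T - 1), (μ {ω | E ω = e'}).toReal)) := by
    refine Tendsto.congr (fun n => (Finset.sum_div _ _ _).symm) ?_
    exact tendsto_finset_sum _ fun e' he' => h1 e' (hsub e' he')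
  have hwt : Tendsto
      (fun n => (sampleCount Eseq {e} n ω' : ℝ)
        / ∑ e' ∈ Finset.Icc 1 (T - 1), (sampleCount Eseq {e'} n ω' : ℝ)) atTop
      (𝓝 ((μ {ω | E ω = e}).toReal
        / ∑ e' ∈ Finset.Icc 1 (T - 1), (μ {ω | E ω = e'}).toReal)) := by
    refine (hNe.div hSum (ne_of_gt hQpos)).congr' ?_
    filter_upwards [eventually_ge_atTop 1] with n hn
    exact div_div_div_same (Nat.cast_ne_zero.mpr (by omega))
  refine hwt.mul (Tendsto.const_mul _ (tendsto_finset_sum _ fun l hlm => ?_))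
  have hl : l < T - e := Finset.mem_range.mp hlm
  have hDe := h2 e (e + l) heT (by omega)
  have hDT := h2 T (e + l) hTT (by omega)
  have key := (hDe.div hNe (ne_of_gt (hP e heT))).sub (hDT.div hNT (ne_of_gt (hP T hTT)))
  rw [hident e he l hl] at key
  refine key.congr' ?_
  filter_upwards [eventually_ge_atTop 1] with n hn
  have hnz : (n : ℝ) ≠ 0 := Nat.cast_ne_zero.mpr (by omega)
  simp only [Pi.div_apply]
  rw [div_div_div_same hnz, div_div_div_same hnz]
  have hnat : ((e : ℤ) + (l : ℤ)).toNat = e + l := by omega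
  simp only [sampleDID, hnat, Finset.mem_singleton]


end
end

section
/- Assume conditional parallel trends (CPT) and no anticipation (NA), and assume n₀(X) ≥ ε almost surely for some ε > 0. Define the doubly robust score ψ₀ := (1{E=e}/m₀)·(Y_t − Y_0 − g₀) − (1{E>t}·m₀(X)/(m₀·n₀(X)))·(Y_t − Y_0 − g₀) − θ₀·1{E=e}/m₀. Then the identification condition holds: E[ψ₀] = 0. (Appendix C: identification condition of the doubly robust score for CATT(e,l).) -/
open MeasureTheory Filter

noncomputable section

/-- The σ-algebra generated by the covariates `X`. -/
def sigmaX {Ω 𝒳 : Type*} [m𝒳 : MeasurableSpace 𝒳] (X : Ω → 𝒳) : MeasurableSpace Ω :=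
  MeasurableSpace.comap X m𝒳

/-- `g₀ := E[Y∞_t − Y∞_0 | σ(X)]` (a fixed version of the conditional expectation). -/
noncomputable def gZero {Ω 𝒳 : Type*} [MeasurableSpace Ω] [MeasurableSpace 𝒳]
    (μ : Measure Ω) (Yinf : ℕ → Ω → ℝ) (X : Ω → 𝒳) (t : ℕ) : Ω → ℝ :=
  μ[fun ω => Yinf t ω - Yinf 0 ω | sigmaX X]

/-- `m₀(X) := E[1{E=e} | σ(X)]`. -/
noncomputable def mZeroX {Ω 𝒳 : Type*} [MeasurableSpace Ω] [MeasurableSpace 𝒳]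
    (μ : Measure Ω) (E : Ω → ℕ) (X : Ω → 𝒳) (e : ℕ) : Ω → ℝ :=
  μ[fun ω => if E ω = e then (1 : ℝ) else 0 | sigmaX X]

/-- `n₀(X) := E[1{E>t} | σ(X)]`. -/
noncomputable def nZeroX {Ω 𝒳 : Type*} [MeasurableSpace Ω] [MeasurableSpace 𝒳]
    (μ : Measure Ω) (E : Ω → ℕ) (X : Ω → 𝒳) (t : ℕ) : Ω → ℝ :=
  μ[fun ω => if t < E ω then (1 : ℝ) else 0 | sigmaX X]

/-- Conditional parallel trends in baseline outcome, given `𝔊 = σ(X)`: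
`E[(Y∞_t − Y∞_s)·1{E=e} | 𝔊] = E[Y∞_t − Y∞_s | 𝔊]·E[1{E=e} | 𝔊]` a.s. -/
def CPT {Ω 𝒳 : Type*} [MeasurableSpace Ω] [MeasurableSpace 𝒳] (μ : Measure Ω) (T : ℕ)
    (E : Ω → ℕ) (Yinf : ℕ → Ω → ℝ) (X : Ω → 𝒳) : Prop :=
  ∀ e ∈ Finset.Icc 1 T, ∀ s ≤ T, ∀ t ≤ T,
    μ[fun ω => (Yinf t ω - Yinf s ω) * (if E ω = e then (1 : ℝ) else 0) | sigmaX X]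
      =ᵐ[μ] fun ω => (μ[fun ω' => Yinf t ω' - Yinf s ω' | sigmaX X]) ω
        * (mZeroX μ E X e) ω


/-- Indicator of `{E = e}` as a real function. -/
def indE {Ω : Type*} (E : Ω → ℕ) (e : ℕ) : Ω → ℝ := fun ω => if E ω = e then 1 else 0

/-- Indicator of `{E > t}` as a real function. -/
def indGt {Ω : Type*} (E : Ω → ℕ) (t : ℕ) : Ω → ℝ := fun ω => if t < E ω then 1 else 0

lemma obsY_eq_of_mem {Ω : Type*} (T : ℕ) (E : Ω → ℕ) (Ye : ℕ → ℕ → Ω → ℝ)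
    (Yinf : ℕ → Ω → ℝ) (s : ℕ) (ω : Ω) (h1 : 1 ≤ E ω) (h2 : E ω ≤ T) :
    obsY T E Ye Yinf s ω = Ye (E ω) s ω := by
  unfold obsY
  rw [Finset.sum_eq_single (E ω)]
  · simp
  · intro b hb hne
    simp [Ne.symm hne]
  · intro h; exact absurd (Finset.mem_Icc.mpr ⟨h1, h2⟩) h

/-- Appendix C (doubly robust score, identification condition): under CPT and NA, with the
not-yet-treated propensity bounded away from zero, the doubly robust score
`ψ₀ := (1{E=e}/m₀)·(Y_t − Y_0 − g₀) − (1{E>t}·m₀(X)/(m₀·n₀(X)))·(Y_t − Y_0 − g₀)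
  − θ₀·1{E=e}/m₀` satisfies `E[ψ₀] = 0`, where `e = t − l` and `θ₀ = CATT(e,l)`. -/
theorem doubly_robust_score_identification
    {Ω 𝒳 : Type*} [MeasurableSpace Ω] [MeasurableSpace 𝒳]
    (μ : Measure Ω) [IsProbabilityMeasure μ]
    (T : ℕ) (hT : 1 ≤ T)
    (E : Ω → ℕ) (hE : Measurable E)
    (hsupp : μ {ω | 1 ≤ E ω ∧ E ω ≤ T} = 1)
    (hpos : ∀ e ∈ Finset.Icc 1 T, 0 < μ {ω | E ω = e})
    (Ye : ℕ → ℕ → Ω → ℝ) (Yinf : ℕ → Ω → ℝ)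
    (hL2e : ∀ e ∈ Finset.Icc 1 T, ∀ t ≤ T, MemLp (Ye e t) 2 μ)
    (hL2inf : ∀ t ≤ T, MemLp (Yinf t) 2 μ)
    (X : Ω → 𝒳) (hX : Measurable X)
    (hCPT : CPT μ T E Yinf X) (hNA : NA μ T Ye Yinf)
    (l t : ℕ) (hl : l ≤ t) (ht : t + 1 ≤ T)
    (he : t - l ∈ Finset.Icc 1 T)
    (ε : ℝ) (hε : 0 < ε) (hn : ∀ᵐ ω ∂μ, ε ≤ nZeroX μ E X t ω) :
    ∫ ω,
        ((if E ω = t - l then (1 : ℝ) else 0) / (μ {ω' | E ω' = t - l}).toReal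
            * (obsY T E Ye Yinf t ω - obsY T E Ye Yinf 0 ω - gZero μ Yinf X t ω)
          - (if t < E ω then (1 : ℝ) else 0) * mZeroX μ E X (t - l) ω
              / ((μ {ω' | E ω' = t - l}).toReal * nZeroX μ E X t ω)
            * (obsY T E Ye Yinf t ω - obsY T E Ye Yinf 0 ω - gZero μ Yinf X t ω)
          - CATT μ E Ye Yinf (t - l) (l : ℤ)
              * (if E ω = t - l then (1 : ℝ) else 0) / (μ {ω' | E ω' = t - l}).toReal) ∂μ
      = 0 := by
  classical
  obtain ⟨he1, heT⟩ := Finset.mem_Icc.mp he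
  have hm : sigmaX X ≤ ‹MeasurableSpace Ω› := hX.comap_le
  haveI : SigmaFinite (μ.trim hm) := inferInstance
  have htT : t ≤ T := Nat.le_of_succ_le ht
  set e := t - l with he_def
  set M := (μ {ω' | E ω' = e}).toReal with hM_def
  have hM : 0 < M := ENNReal.toReal_pos (hpos e he).ne' (measure_ne_top μ _)
  set g₀ := gZero μ Yinf X t with hg0_def
  set mX := mZeroX μ E X e with hmX_def
  set nX := nZeroX μ E X t with hnX_def
  set θ := CATT μ E Ye Yinf e (l : ℤ) with hθ_def
  -- measurability and boundedness of indicators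
  have hD_meas : ∀ e', Measurable (indE E e') := fun e' =>
    Measurable.ite (hE (measurableSet_singleton e')) measurable_const measurable_const
  have hDt_meas : Measurable (indGt E t) :=
    Measurable.ite (hE measurableSet_Ioi) measurable_const measurable_const
  have hDb : ∀ e' ω, ‖indE E e' ω‖ ≤ 1 := by
    intro e' ω; simp only [indE]; split <;> simp
  have hDtb : ∀ ω, ‖indGt E t ω‖ ≤ 1 := by
    intro ω; simp only [indGt]; split <;> simp
  have hD_int : ∀ e', Integrable (indE E e') μ := fun e' =>
    (integrable_const (1 : ℝ)).mono' (hD_meas e').aestronglyMeasurable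
      (Filter.Eventually.of_forall (hDb e'))
  have hDt_int : Integrable (indGt E t) μ :=
    (integrable_const (1 : ℝ)).mono' hDt_meas.aestronglyMeasurable
      (Filter.Eventually.of_forall hDtb)
  -- integrability basics
  have hYinf_int : ∀ s, s ≤ T → Integrable (Yinf s) μ := fun s hs =>
    (hL2inf s hs).integrable one_le_two
  have hYe_int : ∀ e' ∈ Finset.Icc 1 T, ∀ s, s ≤ T → Integrable (Ye e' s) μ :=
    fun e' he' s hs => (hL2e e' he' s hs).integrable one_le_two
  have hΔinf : Integrable (fun ω => Yinf t ω - Yinf 0 ω) μ :=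
    (hYinf_int t htT).sub (hYinf_int 0 (Nat.zero_le T))
  have hg₀_int : Integrable g₀ μ := integrable_condExp
  have hmulD : ∀ (f : Ω → ℝ), Integrable f μ → ∀ e',
      Integrable (fun ω => f ω * indE E e' ω) μ := fun f hf e' =>
    (hf.bdd_mul (hD_meas e').aestronglyMeasurable (Filter.Eventually.of_forall (hDb e'))).congr
      (Filter.Eventually.of_forall fun ω => mul_comm _ _)
  have hmulDt : ∀ (f : Ω → ℝ), Integrable f μ →
      Integrable (fun ω => f ω * indGt E t ω) μ := fun f hf =>
    (hf.bdd_mul hDt_meas.aestronglyMeasurable (Filter.Eventually.of_forall hDtb)).congr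
      (Filter.Eventually.of_forall fun ω => mul_comm _ _)
  have hobs_int : ∀ s, s ≤ T → Integrable (obsY T E Ye Yinf s) μ := by
    intro s hs
    have hrw : obsY T E Ye Yinf s = fun ω =>
        Yinf s ω + ∑ e' ∈ Finset.Icc 1 T, (Ye e' s ω - Yinf s ω) * indE E e' ω := rfl
    rw [hrw]
    exact (hYinf_int s hs).add (integrable_finset_sum _ fun e' he' =>
      hmulD _ ((hYe_int e' he' s hs).sub (hYinf_int s hs)) e')
  have hΔY_int : Integrable
      (fun ω => obsY T E Ye Yinf t ω - obsY T E Ye Yinf 0 ω - g₀ ω) μ :=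
    ((hobs_int t htT).sub (hobs_int 0 (Nat.zero_le T))).sub hg₀_int
  -- bounds on conditional expectations
  have hmX_eq : mX = μ[indE E e | sigmaX X] := hmX_def
  have hnX_eq : nX = μ[indGt E t | sigmaX X] := hnX_def
  have hmX_bd : ∀ᵐ ω ∂μ, 0 ≤ mX ω ∧ mX ω ≤ 1 := by
    have h0 : (0 : Ω → ℝ) ≤ᵐ[μ] mX := by
      rw [hmX_eq]
      exact condExp_nonneg (Filter.Eventually.of_forall fun ω => by
        simp only [indE]; split <;> norm_num)
    have h1 : mX ≤ᵐ[μ] fun _ => (1 : ℝ) := by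
      rw [hmX_eq]
      refine (condExp_mono (hD_int e) (integrable_const (1 : ℝ))
        (Filter.Eventually.of_forall fun ω => by
          simp only [indE]; split <;> norm_num)).trans ?_
      rw [condExp_const hm]
    filter_upwards [h0, h1] with ω ha hb
    exact ⟨ha, hb⟩
  -- the ratio function F
  set F : Ω → ℝ := fun ω => mX ω / (M * nX ω) with hF_def
  have hF_sm : StronglyMeasurable[sigmaX X] F := by
    rw [hF_def, hmX_eq, hnX_eq]
    exact (stronglyMeasurable_condExp.measurable.div
      (measurable_const.mul stronglyMeasurable_condExp.measurable)).stronglyMeasurable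
  have hF_aesm : AEStronglyMeasurable F μ := (hF_sm.mono hm).aestronglyMeasurable
  have hF_bd : ∀ᵐ ω ∂μ, ‖F ω‖ ≤ 1 / (M * ε) := by
    filter_upwards [hmX_bd, hn] with ω hmb hnb
    have hnpos : (0 : ℝ) < nX ω := lt_of_lt_of_le hε hnb
    have hMn : (0 : ℝ) < M * nX ω := mul_pos hM hnpos
    rw [hF_def]
    rw [Real.norm_eq_abs, abs_of_nonneg (div_nonneg hmb.1 hMn.le)]
    exact div_le_div₀ zero_le_one hmb.2 (mul_pos hM hε)
      (mul_le_mul_of_nonneg_left hnb hM.le)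
  -- a.e. support of E
  have hS : ∀ᵐ ω ∂μ, 1 ≤ E ω ∧ E ω ≤ T := by
    have hms : MeasurableSet {ω | 1 ≤ E ω ∧ E ω ≤ T} := hE measurableSet_Icc
    rw [ae_iff]
    have hcompl : {ω | ¬(1 ≤ E ω ∧ E ω ≤ T)} = {ω | 1 ≤ E ω ∧ E ω ≤ T}ᶜ := rfl
    rw [hcompl, measure_compl hms (measure_ne_top μ _), hsupp, measure_univ, tsub_self]
  -- no anticipation, a.e.
  have hNA_ae : ∀ᵐ ω ∂μ, ∀ e' ∈ Finset.Icc 1 T,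
      (1 ≤ e' → Ye e' 0 ω = Yinf 0 ω) ∧ (t < e' → Ye e' t ω = Yinf t ω) := by
    rw [Finset.eventually_all]
    intro e' he'
    obtain ⟨h1, h2⟩ := Finset.mem_Icc.mp he'
    have hb : ∀ᵐ ω ∂μ, t < e' → Ye e' t ω = Yinf t ω := by
      by_cases hte : t < e'
      · exact (hNA e' he' t hte).mono fun ω h _ => h
      · exact Filter.Eventually.of_forall fun ω h => absurd h hte
    filter_upwards [hNA e' he' 0 h1, hb] with ω h0 h2'
    exact ⟨fun _ => h0, h2'⟩
  -- pull-out property for g₀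
  have hpull : ∀ (h : Ω → ℝ), Integrable h μ → (∀ ω, ‖h ω‖ ≤ 1) → Measurable h →
      μ[fun ω => g₀ ω * h ω | sigmaX X] =ᵐ[μ] fun ω => g₀ ω * (μ[h | sigmaX X]) ω := by
    intro h hint hb hmeas
    have hsm : StronglyMeasurable[sigmaX X] g₀ := by
      rw [hg0_def]; exact stronglyMeasurable_condExp
    have h1 : Integrable (fun ω => g₀ ω * h ω) μ :=
      (hg₀_int.bdd_mul hmeas.aestronglyMeasurable (Filter.Eventually.of_forall hb)).congr
        (Filter.Eventually.of_forall fun ω => mul_comm _ _)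
    exact condExp_mul_of_stronglyMeasurable_left hsm h1 hint
  -- CPT instances
  have hCPTe : μ[fun ω => (Yinf t ω - Yinf 0 ω) * indE E e ω | sigmaX X]
      =ᵐ[μ] fun ω => g₀ ω * mX ω := by
    simpa only [hg0_def, gZero, hmX_def, mZeroX, indE] using
      hCPT e he 0 (Nat.zero_le T) t htT
  have hCPT' : ∀ e' ∈ Finset.Icc (t + 1) T,
      μ[fun ω => (Yinf t ω - Yinf 0 ω) * indE E e' ω | sigmaX X]
        =ᵐ[μ] fun ω => g₀ ω * mZeroX μ E X e' ω := by
    intro e' he'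
    have hmem : e' ∈ Finset.Icc 1 T := by
      rw [Finset.mem_Icc] at he' ⊢; omega
    simpa only [hg0_def, gZero, mZeroX, indE] using hCPT e' hmem 0 (Nat.zero_le T) t htT
  -- Dt as a sum of indicators
  have keyDtsum : indGt E t =ᵐ[μ] fun ω => ∑ e' ∈ Finset.Icc (t + 1) T, indE E e' ω := by
    filter_upwards [hS] with ω hSω
    simp only [indGt, indE]
    rw [Finset.sum_ite_eq (Finset.Icc (t + 1) T) (E ω) (fun _ => (1 : ℝ))]
    have hiff : E ω ∈ Finset.Icc (t + 1) T ↔ t < E ω := by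
      rw [Finset.mem_Icc]; omega
    simp only [hiff]
  have hnX_sum : nX =ᵐ[μ] fun ω => ∑ e' ∈ Finset.Icc (t + 1) T, mZeroX μ E X e' ω := by
    rw [hnX_eq]
    refine (condExp_congr_ae keyDtsum).trans ?_
    have hfun : (fun ω => ∑ e' ∈ Finset.Icc (t + 1) T, indE E e' ω)
        = ∑ e' ∈ Finset.Icc (t + 1) T, indE E e' := by
      funext ω; rw [Finset.sum_apply]
    rw [hfun]
    refine (condExp_finsetSum (fun e' _ => hD_int e') _).trans ?_
    refine Filter.EventuallyEq.of_eq ?_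
    funext ω
    rw [Finset.sum_apply]
    exact Finset.sum_congr rfl fun c _ => rfl
  -- conditional expectation of (ΔY∞ - g₀)·Dt is zero
  have hcondG : μ[fun ω => (Yinf t ω - Yinf 0 ω - g₀ ω) * indGt E t ω | sigmaX X]
      =ᵐ[μ] fun _ => (0 : ℝ) := by
    have heq : (fun ω => (Yinf t ω - Yinf 0 ω - g₀ ω) * indGt E t ω)
        = (fun ω => (Yinf t ω - Yinf 0 ω) * indGt E t ω)
          - fun ω => g₀ ω * indGt E t ω := by
      funext ω; simp only [Pi.sub_apply]; ring
    rw [heq]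
    refine (condExp_sub (hmulDt _ hΔinf) (hmulDt _ hg₀_int) _).trans ?_
    have h2 : μ[fun ω => g₀ ω * indGt E t ω | sigmaX X]
        =ᵐ[μ] fun ω => g₀ ω * nX ω := by
      refine (hpull (indGt E t) hDt_int hDtb hDt_meas).trans ?_
      refine Filter.EventuallyEq.of_eq ?_
      rw [hnX_eq]
    have h1 : μ[fun ω => (Yinf t ω - Yinf 0 ω) * indGt E t ω | sigmaX X]
        =ᵐ[μ] fun ω => g₀ ω * nX ω := by
      have heq1 : (fun ω => (Yinf t ω - Yinf 0 ω) * indGt E t ω)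
          =ᵐ[μ] fun ω => ∑ e' ∈ Finset.Icc (t + 1) T,
            (Yinf t ω - Yinf 0 ω) * indE E e' ω := by
        filter_upwards [keyDtsum] with ω hω
        rw [hω, Finset.mul_sum]
      refine (condExp_congr_ae heq1).trans ?_
      have hfun : (fun ω => ∑ e' ∈ Finset.Icc (t + 1) T,
          (Yinf t ω - Yinf 0 ω) * indE E e' ω)
          = ∑ e' ∈ Finset.Icc (t + 1) T,
            fun ω => (Yinf t ω - Yinf 0 ω) * indE E e' ω := by
        funext ω; rw [Finset.sum_apply]
      rw [hfun]
      refine (condExp_finsetSum (fun e' _ => hmulD _ hΔinf e') _).trans ?_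
      have hall : ∀ᵐ ω ∂μ, ∀ e' ∈ Finset.Icc (t + 1) T,
          (μ[fun ω' => (Yinf t ω' - Yinf 0 ω') * indE E e' ω' | sigmaX X]) ω
            = g₀ ω * mZeroX μ E X e' ω := by
        rw [Finset.eventually_all]
        exact fun e' he' => hCPT' e' he'
      filter_upwards [hall, hnX_sum] with ω hω hnω
      rw [Finset.sum_apply, Finset.sum_congr rfl hω, ← Finset.mul_sum, ← hnω]
    filter_upwards [h1, h2] with ω e1 e2
    simp only [Pi.sub_apply]
    rw [e1, e2, sub_self]
  -- a.e. identities for the observed differences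
  have key1 : (fun ω => indE E e ω *
      (obsY T E Ye Yinf t ω - obsY T E Ye Yinf 0 ω - g₀ ω))
      =ᵐ[μ] fun ω => indE E e ω * (Ye e t ω - Yinf t ω)
        + indE E e ω * (Yinf t ω - Yinf 0 ω - g₀ ω) := by
    filter_upwards [hS, hNA_ae] with ω hSω hNAω
    simp only [indE]
    by_cases hEe : E ω = e
    · have h1 : obsY T E Ye Yinf t ω = Ye e t ω := by
        rw [obsY_eq_of_mem T E Ye Yinf t ω hSω.1 hSω.2, hEe]
      have h2 : obsY T E Ye Yinf 0 ω = Yinf 0 ω := by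
        rw [obsY_eq_of_mem T E Ye Yinf 0 ω hSω.1 hSω.2, hEe]
        exact (hNAω e he).1 he1
      rw [if_pos hEe, h1, h2]; ring
    · rw [if_neg hEe]; ring
  have key2 : (fun ω =>
      (obsY T E Ye Yinf t ω - obsY T E Ye Yinf 0 ω - g₀ ω) * indGt E t ω)
      =ᵐ[μ] fun ω => (Yinf t ω - Yinf 0 ω - g₀ ω) * indGt E t ω := by
    filter_upwards [hS, hNA_ae] with ω hSω hNAω
    simp only [indGt]
    by_cases htE : t < E ω
    · have hmem : E ω ∈ Finset.Icc 1 T := Finset.mem_Icc.mpr hSω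
      have h1 : obsY T E Ye Yinf t ω = Yinf t ω := by
        rw [obsY_eq_of_mem T E Ye Yinf t ω hSω.1 hSω.2]
        exact (hNAω _ hmem).2 htE
      have h2 : obsY T E Ye Yinf 0 ω = Yinf 0 ω := by
        rw [obsY_eq_of_mem T E Ye Yinf 0 ω hSω.1 hSω.2]
        exact (hNAω _ hmem).1 hSω.1
      rw [h1, h2]
    · rw [if_neg htE]; ring
  -- the three integral computations
  have hDeYe : ∫ ω, indE E e ω * (Ye e t ω - Yinf t ω) ∂μ = M * θ := by
    have hτ : (((e : ℕ) : ℤ) + (l : ℤ)).toNat = t := by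
      rw [he_def]; omega
    have hms : MeasurableSet {ω' | E ω' = e} := hE (measurableSet_singleton e)
    have hind : ∀ f : Ω → ℝ, (fun ω => indE E e ω * f ω)
        = Set.indicator {ω' | E ω' = e} f := by
      intro f; funext ω
      by_cases h : E ω = e <;> simp [indE, Set.indicator, h]
    rw [hθ_def]
    simp only [CATT, cexp, hτ]
    rw [hM_def, hind, integral_indicator hms, mul_comm, div_mul_cancel₀]
    exact (ENNReal.toReal_pos (hpos e he).ne' (measure_ne_top μ _)).ne'
  have hDeΔinf0 : ∫ ω, indE E e ω * (Yinf t ω - Yinf 0 ω - g₀ ω) ∂μ = 0 := by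
    have hsplit : (fun ω => indE E e ω * (Yinf t ω - Yinf 0 ω - g₀ ω))
        = fun ω => (Yinf t ω - Yinf 0 ω) * indE E e ω - g₀ ω * indE E e ω := by
      funext ω; ring
    rw [hsplit, integral_sub (hmulD _ hΔinf e) (hmulD _ hg₀_int e)]
    have h1 : ∫ ω, (Yinf t ω - Yinf 0 ω) * indE E e ω ∂μ = ∫ ω, g₀ ω * mX ω ∂μ := by
      calc ∫ ω, (Yinf t ω - Yinf 0 ω) * indE E e ω ∂μ
          = ∫ ω, (μ[fun ω' => (Yinf t ω' - Yinf 0 ω') * indE E e ω' | sigmaX X]) ω ∂μ :=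
            (integral_condExp hm).symm
        _ = ∫ ω, g₀ ω * mX ω ∂μ := integral_congr_ae hCPTe
    have h2 : ∫ ω, g₀ ω * indE E e ω ∂μ = ∫ ω, g₀ ω * mX ω ∂μ := by
      calc ∫ ω, g₀ ω * indE E e ω ∂μ
          = ∫ ω, (μ[fun ω' => g₀ ω' * indE E e ω' | sigmaX X]) ω ∂μ :=
            (integral_condExp hm).symm
        _ = ∫ ω, g₀ ω * (μ[indE E e | sigmaX X]) ω ∂μ :=
            integral_congr_ae (hpull (indE E e) (hD_int e) (hDb e) (hD_meas e))
        _ = ∫ ω, g₀ ω * mX ω ∂μ := by rw [← hmX_eq]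
    rw [h1, h2, sub_self]
  have hDe_val : ∫ ω, indE E e ω ∂μ = M := by
    have hind : indE E e = Set.indicator {ω' | E ω' = e} (fun _ => (1 : ℝ)) := by
      funext ω; by_cases h : E ω = e <;> simp [indE, Set.indicator, h]
    have hms : MeasurableSet {ω' | E ω' = e} := hE (measurableSet_singleton e)
    rw [hind, integral_indicator hms, setIntegral_const,
      smul_eq_mul, mul_one, hM_def, measureReal_def]
  -- the second (not-yet-treated) term vanishes
  have hFG : ∫ ω, F ω *
      ((obsY T E Ye Yinf t ω - obsY T E Ye Yinf 0 ω - g₀ ω) * indGt E t ω) ∂μ = 0 := by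
    have hcong : (fun ω => F ω *
        ((obsY T E Ye Yinf t ω - obsY T E Ye Yinf 0 ω - g₀ ω) * indGt E t ω))
        =ᵐ[μ] fun ω => F ω * ((Yinf t ω - Yinf 0 ω - g₀ ω) * indGt E t ω) :=
      key2.mono fun ω h => congrArg (fun z => F ω * z) h
    rw [integral_congr_ae hcong]
    have hG_int : Integrable (fun ω => (Yinf t ω - Yinf 0 ω - g₀ ω) * indGt E t ω) μ :=
      hmulDt _ (hΔinf.sub hg₀_int)
    have hFG_int : Integrable
        (fun ω => F ω * ((Yinf t ω - Yinf 0 ω - g₀ ω) * indGt E t ω)) μ :=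
      hG_int.bdd_mul hF_aesm hF_bd
    have hpull2 := condExp_mul_of_stronglyMeasurable_left (m := sigmaX X) hF_sm hFG_int hG_int
    calc ∫ ω, F ω * ((Yinf t ω - Yinf 0 ω - g₀ ω) * indGt E t ω) ∂μ
        = ∫ ω, (μ[F * fun ω' => (Yinf t ω' - Yinf 0 ω' - g₀ ω') * indGt E t ω' | sigmaX X]) ω ∂μ := by
          rw [integral_condExp hm]; rfl
      _ = ∫ ω, (F * μ[fun ω' => (Yinf t ω' - Yinf 0 ω' - g₀ ω') * indGt E t ω' | sigmaX X]) ω ∂μ :=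
          integral_congr_ae hpull2
      _ = 0 := by
          have hz : (F * μ[fun ω' => (Yinf t ω' - Yinf 0 ω' - g₀ ω') * indGt E t ω' | sigmaX X])
              =ᵐ[μ] fun _ => (0 : ℝ) := by
            filter_upwards [hcondG] with ω h
            simp only [Pi.mul_apply, h, mul_zero]
          rw [integral_congr_ae hz, integral_zero]
  -- assemble
  have hmain : (fun ω =>
      (if E ω = e then (1 : ℝ) else 0) / M
          * (obsY T E Ye Yinf t ω - obsY T E Ye Yinf 0 ω - gZero μ Yinf X t ω)
        - (if t < E ω then (1 : ℝ) else 0) * mX ω / (M * nX ω)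
            * (obsY T E Ye Yinf t ω - obsY T E Ye Yinf 0 ω - gZero μ Yinf X t ω)
        - θ * (if E ω = e then (1 : ℝ) else 0) / M)
      = fun ω => M⁻¹ * (indE E e ω
          * (obsY T E Ye Yinf t ω - obsY T E Ye Yinf 0 ω - g₀ ω))
        - F ω * ((obsY T E Ye Yinf t ω - obsY T E Ye Yinf 0 ω - g₀ ω) * indGt E t ω)
        - θ / M * indE E e ω := by
    funext ω
    simp only [indE, indGt, hF_def, ← hg0_def]
    ring
  rw [hmain]
  have hP : Integrable (fun ω => M⁻¹ * (indE E e ω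
      * (obsY T E Ye Yinf t ω - obsY T E Ye Yinf 0 ω - g₀ ω))) μ :=
    (hΔY_int.bdd_mul (hD_meas e).aestronglyMeasurable (Filter.Eventually.of_forall (hDb e))).const_mul _
  have hQ : Integrable (fun ω => F ω *
      ((obsY T E Ye Yinf t ω - obsY T E Ye Yinf 0 ω - g₀ ω) * indGt E t ω)) μ :=
    (hmulDt _ hΔY_int).bdd_mul hF_aesm hF_bd
  have hR : Integrable (fun ω => θ / M * indE E e ω) μ := (hD_int e).const_mul _
  have hPQ : Integrable (fun ω => M⁻¹ * (indE E e ω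
      * (obsY T E Ye Yinf t ω - obsY T E Ye Yinf 0 ω - g₀ ω))
      - F ω * ((obsY T E Ye Yinf t ω - obsY T E Ye Yinf 0 ω - g₀ ω) * indGt E t ω)) μ :=
    hP.sub hQ
  rw [integral_sub hPQ hR, integral_sub hP hQ]
  have hPval : ∫ ω, M⁻¹ * (indE E e ω
      * (obsY T E Ye Yinf t ω - obsY T E Ye Yinf 0 ω - g₀ ω)) ∂μ = θ := by
    rw [integral_const_mul]
    have hinner : ∫ ω, indE E e ω
        * (obsY T E Ye Yinf t ω - obsY T E Ye Yinf 0 ω - g₀ ω) ∂μ = M * θ := by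
      have hint1 : Integrable (fun ω => indE E e ω * (Ye e t ω - Yinf t ω)) μ :=
        (hmulD _ ((hYe_int e he t htT).sub (hYinf_int t htT)) e).congr
          (Filter.Eventually.of_forall fun ω => mul_comm _ _)
      have hint2 : Integrable
          (fun ω => indE E e ω * (Yinf t ω - Yinf 0 ω - g₀ ω)) μ :=
        (hmulD _ (hΔinf.sub hg₀_int) e).congr
          (Filter.Eventually.of_forall fun ω => mul_comm _ _)
      rw [integral_congr_ae key1, integral_add hint1 hint2]
      rw [hDeYe, hDeΔinf0, add_zero]
    rw [hinner, inv_mul_cancel_left₀ hM.ne']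
  have hRval : ∫ ω, θ / M * indE E e ω ∂μ = θ := by
    rw [integral_const_mul, hDe_val, div_mul_cancel₀ _ hM.ne']
  rw [hPval, hFG, hRval]
  ring

end
end
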